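/- Johansson's de-Poissonisation lemma: let (q_n)_{n≥0} be a sequence with 0 ≤ q_n ≤ 1 and q_n ≥ q_{n+1} for all n, and define φ(ξ) = e^{-ξ} Σ_{n=0}^∞ q_n ξ^n/n!. For each d > 0, setting μ_n^{(d)} = n + (2√(d+1)+1)√(n log n) and ν_n^{(d)} = n − (2√(d+1)+1)√(n log n), there exist a constant C > 0 and n_0 such that for all n ≥ n_0: φ(μ_n^{(d)}) − C n^{−d} ≤ q_n ≤ φ(ν_n^{(d)}) + C n^{−d}. -/

import Mathlib

open Real Finset

set_option maxHeartbeats 1000000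

section DePoissonHelpers

lemma dp_tsum_exp (x : ℝ) : ∑' n : ℕ, x ^ n / (Nat.factorial n : ℝ) = Real.exp x := by
  rw [Real.exp_eq_exp_ℝ, NormedSpace.exp_eq_tsum_div]

lemma dp_tail_le_exp {x : ℝ} (hx : 0 ≤ x) (m : ℕ) :
    ∑' j : ℕ, x ^ (j + m) / (Nat.factorial (j + m) : ℝ) ≤ Real.exp x := by
  have hs := Real.summable_pow_div_factorial x
  have h := Summable.sum_add_tsum_nat_add (f := fun n => x ^ n / (Nat.factorial n : ℝ)) m hs
  have hpos : (0:ℝ) ≤ ∑ i ∈ range m, x ^ i / (Nat.factorial i : ℝ) := by positivity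
  nlinarith [dp_tsum_exp x]

lemma dp_pow_split {l θ : ℝ} (k : ℕ) : l ^ k = (l * Real.exp (-θ)) ^ k * Real.exp (θ * k) := by
  rw [mul_pow, ← Real.exp_nat_mul, mul_assoc, ← Real.exp_add]
  ring_nf
  simp

lemma dp_chernoff_lower {l θ : ℝ} (hl : 0 ≤ l) (ht : 0 ≤ θ) (n : ℕ) :
    Real.exp (-l) * ∑ k ∈ range n, l ^ k / (Nat.factorial k : ℝ) ≤
      Real.exp (θ * ((n:ℝ) - 1) + l * (Real.exp (-θ) - 1)) := by
  have key : ∀ k ∈ range n, l ^ k / (Nat.factorial k : ℝ) ≤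
      Real.exp (θ * ((n:ℝ)-1)) * ((l * Real.exp (-θ)) ^ k / (Nat.factorial k : ℝ)) := by
    intro k hk
    rw [mem_range] at hk
    have hk' : (k:ℝ) ≤ (n:ℝ) - 1 := by
      have : (k:ℝ) + 1 ≤ n := by exact_mod_cast hk
      linarith
    rw [dp_pow_split (θ := θ) k]
    have h2 : Real.exp (θ * k) ≤ Real.exp (θ * ((n:ℝ)-1)) :=
      Real.exp_le_exp.2 (mul_le_mul_of_nonneg_left hk' ht)
    have h3 : (0:ℝ) ≤ (l * Real.exp (-θ)) ^ k / (Nat.factorial k : ℝ) := by positivity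
    calc (l * Real.exp (-θ)) ^ k * Real.exp (θ * k) / (Nat.factorial k : ℝ)
        = (l * Real.exp (-θ)) ^ k / (Nat.factorial k : ℝ) * Real.exp (θ * k) := by ring
      _ ≤ (l * Real.exp (-θ)) ^ k / (Nat.factorial k : ℝ) * Real.exp (θ * ((n:ℝ)-1)) :=
          mul_le_mul_of_nonneg_left h2 h3
      _ = Real.exp (θ * ((n:ℝ)-1)) * ((l * Real.exp (-θ)) ^ k / (Nat.factorial k : ℝ)) := by ring
  have hsum : ∑ k ∈ range n, l ^ k / (Nat.factorial k : ℝ) ≤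
      Real.exp (θ * ((n:ℝ)-1)) * Real.exp (l * Real.exp (-θ)) := by
    calc ∑ k ∈ range n, l ^ k / (Nat.factorial k : ℝ)
        ≤ ∑ k ∈ range n, Real.exp (θ * ((n:ℝ)-1)) * ((l * Real.exp (-θ)) ^ k / (Nat.factorial k : ℝ)) :=
          Finset.sum_le_sum key
      _ = Real.exp (θ * ((n:ℝ)-1)) * ∑ k ∈ range n, (l * Real.exp (-θ)) ^ k / (Nat.factorial k : ℝ) := by
          rw [Finset.mul_sum]
      _ ≤ Real.exp (θ * ((n:ℝ)-1)) * Real.exp (l * Real.exp (-θ)) := by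
          apply mul_le_mul_of_nonneg_left _ (Real.exp_nonneg _)
          exact Real.sum_le_exp_of_nonneg (by positivity) n
  calc Real.exp (-l) * ∑ k ∈ range n, l ^ k / (Nat.factorial k : ℝ)
      ≤ Real.exp (-l) * (Real.exp (θ * ((n:ℝ)-1)) * Real.exp (l * Real.exp (-θ))) :=
        mul_le_mul_of_nonneg_left hsum (Real.exp_nonneg _)
    _ = Real.exp (θ * ((n:ℝ) - 1) + l * (Real.exp (-θ) - 1)) := by
        rw [← Real.exp_add, ← Real.exp_add]; congr 1; ring

lemma dp_chernoff_upper {l θ : ℝ} (hl : 0 ≤ l) (ht : 0 ≤ θ) (n : ℕ) :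
    Real.exp (-l) * ∑' j : ℕ, l ^ (j + n) / (Nat.factorial (j + n) : ℝ) ≤
      Real.exp (l * (Real.exp θ - 1) - θ * n) := by
  have hg : Summable (fun j : ℕ => Real.exp (-(θ * n)) * ((l * Real.exp θ) ^ (j + n) / (Nat.factorial (j + n) : ℝ))) := by
    apply Summable.mul_left
    exact (summable_nat_add_iff (f := fun k => (l * Real.exp θ) ^ k / (Nat.factorial k : ℝ)) n).2
      (Real.summable_pow_div_factorial _)
  have hf : Summable (fun j : ℕ => l ^ (j + n) / (Nat.factorial (j + n) : ℝ)) :=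
    (summable_nat_add_iff (f := fun k => l ^ k / (Nat.factorial k : ℝ)) n).2
      (Real.summable_pow_div_factorial _)
  have key : ∀ j : ℕ, l ^ (j + n) / (Nat.factorial (j + n) : ℝ) ≤
      Real.exp (-(θ * n)) * ((l * Real.exp θ) ^ (j + n) / (Nat.factorial (j + n) : ℝ)) := by
    intro j
    have h1 : l ^ (j+n) = (l * Real.exp θ) ^ (j+n) * Real.exp (-θ * (j+n)) := by
      have := dp_pow_split (l := l) (θ := -θ) (j+n)
      simpa using this
    rw [h1]
    have h2 : Real.exp (-θ * ((j:ℝ)+(n:ℝ))) ≤ Real.exp (-(θ * n)) := by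
      apply Real.exp_le_exp.2
      nlinarith [Nat.cast_nonneg (α := ℝ) j]
    have h3 : (0:ℝ) ≤ (l * Real.exp θ) ^ (j+n) / (Nat.factorial (j+n) : ℝ) := by positivity
    calc (l * Real.exp θ) ^ (j+n) * Real.exp (-θ * ((j:ℝ)+(n:ℝ))) / (Nat.factorial (j+n) : ℝ)
        = (l * Real.exp θ) ^ (j+n) / (Nat.factorial (j+n) : ℝ) * Real.exp (-θ * ((j:ℝ)+(n:ℝ))) := by
          ring
      _ ≤ (l * Real.exp θ) ^ (j+n) / (Nat.factorial (j+n) : ℝ) * Real.exp (-(θ * n)) :=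
          mul_le_mul_of_nonneg_left h2 h3
      _ = Real.exp (-(θ * n)) * ((l * Real.exp θ) ^ (j+n) / (Nat.factorial (j+n) : ℝ)) := by ring
  have hsum : ∑' j : ℕ, l ^ (j + n) / (Nat.factorial (j + n) : ℝ) ≤
      Real.exp (-(θ * n)) * Real.exp (l * Real.exp θ) := by
    calc ∑' j : ℕ, l ^ (j + n) / (Nat.factorial (j + n) : ℝ)
        ≤ ∑' j : ℕ, Real.exp (-(θ * n)) * ((l * Real.exp θ) ^ (j + n) / (Nat.factorial (j + n) : ℝ)) :=
          Summable.tsum_le_tsum key hf hg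
      _ = Real.exp (-(θ * n)) * ∑' j : ℕ, (l * Real.exp θ) ^ (j + n) / (Nat.factorial (j + n) : ℝ) :=
          tsum_mul_left
      _ ≤ Real.exp (-(θ * n)) * Real.exp (l * Real.exp θ) :=
          mul_le_mul_of_nonneg_left (dp_tail_le_exp (by positivity) n) (Real.exp_nonneg _)
  calc Real.exp (-l) * ∑' j : ℕ, l ^ (j + n) / (Nat.factorial (j + n) : ℝ)
      ≤ Real.exp (-l) * (Real.exp (-(θ * n)) * Real.exp (l * Real.exp θ)) := by
        apply mul_le_mul_of_nonneg_left hsum (Real.exp_nonneg _)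
    _ = Real.exp (l * (Real.exp θ - 1) - θ * n) := by
        rw [← Real.exp_add, ← Real.exp_add]; congr 1; ring

lemma dp_exp_quad_pos {θ : ℝ} (h0 : 0 ≤ θ) (h1 : θ ≤ 1) :
    Real.exp θ ≤ 1 + θ + (3/4)*θ^2 := by
  have hb := Real.exp_bound (x := θ) (by rwa [abs_of_nonneg h0]) (n := 3) (by norm_num)
  have h2 : ∑ i ∈ range 3, θ ^ i / (Nat.factorial i : ℝ) = 1 + θ + θ^2/2 := by
    simp [Finset.sum_range_succ, Nat.factorial]
  rw [h2, abs_of_nonneg h0] at hb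
  norm_num [Nat.factorial] at hb
  have habs := abs_le.1 hb
  have h3 : θ^3 ≤ θ^2 := by nlinarith [sq_nonneg θ]
  nlinarith [habs.2]

lemma dp_exp_quad_neg {θ : ℝ} (h0 : 0 ≤ θ) (h1 : θ ≤ 1) :
    Real.exp (-θ) ≤ 1 - θ + (3/4)*θ^2 := by
  have hb := Real.exp_bound (x := -θ) (by rwa [abs_neg, abs_of_nonneg h0]) (n := 3) (by norm_num)
  have h2 : ∑ i ∈ range 3, (-θ) ^ i / (Nat.factorial i : ℝ) = 1 - θ + θ^2/2 := by
    simp [Finset.sum_range_succ, Nat.factorial]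
    ring
  rw [h2, abs_neg, abs_of_nonneg h0] at hb
  norm_num [Nat.factorial] at hb
  have habs := abs_le.1 hb
  have h3 : θ^3 ≤ θ^2 := by nlinarith [sq_nonneg θ]
  nlinarith [habs.2]

end DePoissonHelpers

/-- The Poissonization of a sequence `q`. -/
noncomputable def poissonize (q : ℕ → ℝ) (ξ : ℝ) : ℝ :=
  Real.exp (-ξ) * ∑' n : ℕ, q n * ξ ^ n / (Nat.factorial n : ℝ)

section DePoissonPhi

variable {q : ℕ → ℝ}

lemma dp_qsummable (h0 : ∀ n, 0 ≤ q n) (h1 : ∀ n, q n ≤ 1) {ξ : ℝ} (hξ : 0 ≤ ξ) :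
    Summable (fun k => q k * ξ ^ k / (Nat.factorial k : ℝ)) := by
  apply Summable.of_nonneg_of_le
    (fun k => by have := h0 k; positivity)
    (fun k => ?_) (Real.summable_pow_div_factorial ξ)
  have h : q k * ξ ^ k ≤ 1 * ξ ^ k := mul_le_mul_of_nonneg_right (h1 k) (by positivity)
  rw [one_mul] at h
  exact div_le_div_of_nonneg_right h (by positivity) |>.trans_eq rfl

lemma dp_phi_upper (h0 : ∀ n, 0 ≤ q n) (h1 : ∀ n, q n ≤ 1) (hanti : Antitone q)
    {ξ : ℝ} (hξ : 0 ≤ ξ) (n : ℕ) :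
    poissonize q ξ ≤ Real.exp (-ξ) * ∑ k ∈ range n, ξ ^ k / (Nat.factorial k : ℝ) + q n := by
  have hsum := dp_qsummable h0 h1 hξ
  unfold poissonize
  rw [← Summable.sum_add_tsum_nat_add (f := fun k => q k * ξ ^ k / (Nat.factorial k : ℝ)) n hsum,
    mul_add]
  apply add_le_add
  · apply mul_le_mul_of_nonneg_left _ (Real.exp_nonneg _)
    apply Finset.sum_le_sum
    intro k _
    have h : q k * ξ ^ k ≤ 1 * ξ ^ k := mul_le_mul_of_nonneg_right (h1 k) (by positivity)
    rw [one_mul] at h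
    exact div_le_div_of_nonneg_right h (by positivity)
  · have hstep : ∑' j : ℕ, q (j + n) * ξ ^ (j + n) / (Nat.factorial (j + n) : ℝ) ≤
        q n * ∑' j : ℕ, ξ ^ (j + n) / (Nat.factorial (j + n) : ℝ) := by
      rw [← tsum_mul_left]
      have hf : Summable (fun j : ℕ => q (j + n) * ξ ^ (j + n) / (Nat.factorial (j + n) : ℝ)) :=
        (summable_nat_add_iff (f := fun k => q k * ξ ^ k / (Nat.factorial k : ℝ)) n).2 hsum
      have hg : Summable (fun j : ℕ => q n * (ξ ^ (j + n) / (Nat.factorial (j + n) : ℝ))) :=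
        Summable.mul_left _ ((summable_nat_add_iff
          (f := fun k => ξ ^ k / (Nat.factorial k : ℝ)) n).2 (Real.summable_pow_div_factorial ξ))
      apply Summable.tsum_le_tsum _ hf hg
      intro j
      have hq : q (j + n) ≤ q n := hanti (Nat.le_add_left n j)
      have h : q (j + n) * ξ ^ (j + n) ≤ q n * ξ ^ (j + n) :=
        mul_le_mul_of_nonneg_right hq (by positivity)
      calc q (j + n) * ξ ^ (j + n) / (Nat.factorial (j + n) : ℝ)
          ≤ q n * ξ ^ (j + n) / (Nat.factorial (j + n) : ℝ) :=
            div_le_div_of_nonneg_right h (by positivity)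
        _ = q n * (ξ ^ (j + n) / (Nat.factorial (j + n) : ℝ)) := by ring
    have htail := dp_tail_le_exp hξ n
    have htail0 : (0:ℝ) ≤ ∑' j : ℕ, ξ ^ (j + n) / (Nat.factorial (j + n) : ℝ) :=
      tsum_nonneg (fun j => by positivity)
    calc Real.exp (-ξ) * ∑' j : ℕ, q (j + n) * ξ ^ (j + n) / (Nat.factorial (j + n) : ℝ)
        ≤ Real.exp (-ξ) * (q n * ∑' j : ℕ, ξ ^ (j + n) / (Nat.factorial (j + n) : ℝ)) :=
          mul_le_mul_of_nonneg_left hstep (Real.exp_nonneg _)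
      _ ≤ Real.exp (-ξ) * (q n * Real.exp ξ) := by
          apply mul_le_mul_of_nonneg_left _ (Real.exp_nonneg _)
          exact mul_le_mul_of_nonneg_left htail (h0 n)
      _ = q n := by rw [← mul_assoc, mul_comm (Real.exp (-ξ)), mul_assoc, ← Real.exp_add]
                    simp

lemma dp_phi_lower (h0 : ∀ n, 0 ≤ q n) (h1 : ∀ n, q n ≤ 1) (hanti : Antitone q)
    {ξ : ℝ} (hξ : 0 ≤ ξ) (n : ℕ) :
    q n ≤ poissonize q ξ +
      Real.exp (-ξ) * ∑' j : ℕ, ξ ^ (j + (n+1)) / (Nat.factorial (j + (n+1)) : ℝ) := by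
  have hsum := dp_qsummable h0 h1 hξ
  unfold poissonize
  rw [← Summable.sum_add_tsum_nat_add (f := fun k => q k * ξ ^ k / (Nat.factorial k : ℝ)) (n+1) hsum,
    mul_add]
  set E := Real.exp (-ξ) with hE
  set S := ∑ k ∈ range (n+1), ξ ^ k / (Nat.factorial k : ℝ) with hS
  set T := ∑' j : ℕ, ξ ^ (j + (n+1)) / (Nat.factorial (j + (n+1)) : ℝ) with hT
  have hsplit := Summable.sum_add_tsum_nat_add (f := fun k => ξ ^ k / (Nat.factorial k : ℝ)) (n+1)
    (Real.summable_pow_div_factorial ξ)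
  have hid : E * S + E * T = 1 := by
    rw [← mul_add, hS, hT]
    rw [hsplit, dp_tsum_exp, hE, ← Real.exp_add]
    simp
  have h2 : q n * S ≤ ∑ k ∈ range (n+1), q k * ξ ^ k / (Nat.factorial k : ℝ) := by
    rw [hS, Finset.mul_sum]
    apply Finset.sum_le_sum
    intro k hk
    rw [mem_range, Nat.lt_succ_iff] at hk
    have hq : q n ≤ q k := hanti hk
    have h : q n * ξ ^ k ≤ q k * ξ ^ k := mul_le_mul_of_nonneg_right hq (by positivity)
    calc q n * (ξ ^ k / (Nat.factorial k : ℝ)) = q n * ξ ^ k / (Nat.factorial k : ℝ) := by ring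
      _ ≤ q k * ξ ^ k / (Nat.factorial k : ℝ) := div_le_div_of_nonneg_right h (by positivity)
  have h2' : E * (q n * S) ≤ E * ∑ k ∈ range (n+1), q k * ξ ^ k / (Nat.factorial k : ℝ) :=
    mul_le_mul_of_nonneg_left h2 (Real.exp_nonneg _)
  have hT0 : 0 ≤ T := tsum_nonneg (fun j => by positivity)
  have hE0 : 0 ≤ E := Real.exp_nonneg _
  have hB0 : 0 ≤ E * ∑' j : ℕ, q (j + (n+1)) * ξ ^ (j + (n+1)) / (Nat.factorial (j + (n+1)) : ℝ) := by
    apply mul_nonneg hE0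
    apply tsum_nonneg
    intro j
    have := h0 (j + (n+1))
    positivity
  have hqn0 := h0 n
  have hqn1 := h1 n
  nlinarith [mul_nonneg (mul_nonneg hE0 hT0) (sub_nonneg.2 hqn1)]

end DePoissonPhi

/-- Johansson's de-Poissonisation lemma. -/
theorem dePoissonisation (q : ℕ → ℝ) (h0 : ∀ n, 0 ≤ q n) (h1 : ∀ n, q n ≤ 1)
    (hmono : ∀ n, q (n + 1) ≤ q n) (d : ℝ) (hd : 0 < d) :
    ∃ C > (0 : ℝ), ∃ n₀ : ℕ, ∀ n : ℕ, n₀ ≤ n →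
      poissonize q ((n : ℝ) + (2 * Real.sqrt (d + 1) + 1) * Real.sqrt (n * Real.log n))
          - C * (n : ℝ) ^ (-d) ≤ q n ∧
      q n ≤ poissonize q ((n : ℝ) - (2 * Real.sqrt (d + 1) + 1) * Real.sqrt (n * Real.log n))
          + C * (n : ℝ) ^ (-d) := by
  have hanti : Antitone q := antitone_nat_of_succ_le hmono
  set c : ℝ := 2 * Real.sqrt (d + 1) + 1 with hc
  clear_value c
  have hsq : Real.sqrt (d + 1) ^ 2 = d + 1 := Real.sq_sqrt (by linarith)
  have hsq0 : 0 ≤ Real.sqrt (d + 1) := Real.sqrt_nonneg _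
  have hc1 : 1 ≤ c := by rw [hc]; linarith
  have hc0 : 0 < c := by linarith
  have hcd : d ≤ (17/64) * c^2 := by
    rw [hc]; nlinarith
  refine ⟨1, one_pos, ⌈(32 * c^2)^2⌉₊ + 2, fun n hn => ?_⟩
  -- basic numeric setup
  have hn2 : 2 ≤ n := le_trans (Nat.le_add_left 2 _) hn
  have hn1R : (1:ℝ) ≤ n := by exact_mod_cast le_trans (by norm_num) hn2
  have hn0 : (0:ℝ) < n := by linarith
  have hn32 : (32 * c^2)^2 ≤ (n:ℝ) := by
    have h := Nat.le_ceil ((32 * c^2)^2)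
    have h' : (⌈(32 * c^2)^2⌉₊ : ℝ) ≤ (n:ℝ) := by
      exact_mod_cast le_trans (Nat.le_add_right _ 2) hn
    linarith
  set L : ℝ := Real.log n with hLdef
  clear_value L
  have hL0 : 0 ≤ L := by rw [hLdef]; exact Real.log_nonneg hn1R
  set s : ℝ := c * Real.sqrt (n * L) with hsdef
  clear_value s
  have hs0 : 0 ≤ s := by rw [hsdef]; exact mul_nonneg hc0.le (Real.sqrt_nonneg _)
  have hs2 : s^2 = c^2 * ((n:ℝ) * L) := by
    rw [hsdef, mul_pow, Real.sq_sqrt (mul_nonneg hn0.le hL0)]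
  -- sqrt n bounds
  have hsqrtn0 : 0 < Real.sqrt n := Real.sqrt_pos.2 hn0
  have hsqrtn_sq : Real.sqrt n ^ 2 = (n:ℝ) := Real.sq_sqrt hn0.le
  have h32 : 32 * c^2 ≤ Real.sqrt n := by
    have h0' : (0:ℝ) ≤ 32 * c^2 := by positivity
    calc 32 * c^2 = Real.sqrt ((32 * c^2)^2) := (Real.sqrt_sq h0').symm
      _ ≤ Real.sqrt n := Real.sqrt_le_sqrt hn32
  have hL2 : L ≤ 2 * Real.sqrt n := by
    have h1' := Real.log_le_sub_one_of_pos hsqrtn0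
    have h2' : Real.log (Real.sqrt n) = L / 2 := by
      rw [hLdef, Real.log_sqrt hn0.le]
    linarith
  -- s ≤ n/4
  have hsn : s ≤ (n:ℝ)/4 := by
    have e5 : s^2 ≤ 2*c^2 * ((n:ℝ) * Real.sqrt n) := by
      have h' : c^2 * ((n:ℝ) * L) ≤ c^2 * ((n:ℝ) * (2 * Real.sqrt n)) := by
        apply mul_le_mul_of_nonneg_left _ (sq_nonneg c)
        exact mul_le_mul_of_nonneg_left hL2 hn0.le
      rw [hs2]
      calc c^2 * ((n:ℝ) * L) ≤ c^2 * ((n:ℝ) * (2 * Real.sqrt n)) := h'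
        _ = 2*c^2 * ((n:ℝ) * Real.sqrt n) := by ring
    have e6 : 2*c^2 * ((n:ℝ) * Real.sqrt n) ≤ (Real.sqrt n / 16) * ((n:ℝ) * Real.sqrt n) :=
      mul_le_mul_of_nonneg_right (by linarith) (mul_nonneg hn0.le hsqrtn0.le)
    have e7 : (Real.sqrt n / 16) * ((n:ℝ) * Real.sqrt n) = (n:ℝ)^2/16 := by
      have : Real.sqrt n * Real.sqrt n = (n:ℝ) := by nlinarith [hsqrtn_sq]
      nlinarith [this]
    have hsq_le : s^2 ≤ (n:ℝ)^2/16 := by linarith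
    nlinarith [hs0, hn0.le, hsq_le]
  set θ : ℝ := s / (2 * n) with hθdef
  clear_value θ
  have hθ0 : 0 ≤ θ := by rw [hθdef]; positivity
  have hθs : 2 * (n:ℝ) * θ = s := by
    rw [hθdef]; field_simp
  have hθ1 : θ ≤ 1 := by
    rw [hθdef, div_le_one (by positivity)]
    linarith
  -- d * (n * L) ≤ (17/64) * s^2
  have hdnL : d * ((n:ℝ) * L) ≤ (17/64) * s^2 := by
    rw [hs2]
    have := mul_le_mul_of_nonneg_right hcd (mul_nonneg hn0.le hL0)
    linarith
  have hs2' : s^2 = 4 * (n:ℝ)^2 * θ^2 := by nlinarith [hθs]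
  have hsθ : s * θ = 2 * (n:ℝ) * θ^2 := by nlinarith [hθs]
  have hdLθ : d * L ≤ (17/16) * (n:ℝ) * θ^2 := by
    have h' : d * ((n:ℝ) * L) ≤ (17/64) * (4 * (n:ℝ)^2 * θ^2) := by
      rw [← hs2']; exact hdnL
    nlinarith [hn0]
  -- target: exp(-d*L) = n^(-d)
  have hrpow : Real.exp (-(d * L)) = (n:ℝ) ^ (-d) := by
    rw [Real.rpow_def_of_pos hn0]
    congr 1
    rw [hLdef]; ring
  constructor
  · -- lower bound: poissonize at μ = n + s
    have hμ0 : (0:ℝ) ≤ (n:ℝ) + s := by linarith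
    have hA := dp_phi_upper h0 h1 hanti hμ0 n
    have hB := dp_chernoff_lower (l := (n:ℝ) + s) hμ0 hθ0 n
    have hE1 : θ * ((n:ℝ) - 1) + ((n:ℝ) + s) * (Real.exp (-θ) - 1) ≤ -(d * L) := by
      have hq := dp_exp_quad_neg hθ0 hθ1
      have step1 : ((n:ℝ) + s) * (Real.exp (-θ) - 1) ≤ ((n:ℝ) + s) * (-θ + (3/4)*θ^2) :=
        mul_le_mul_of_nonneg_left (by linarith) hμ0
      have hθ2 : 0 ≤ θ^2 := sq_nonneg θ
      have e2 : s * θ^2 ≤ ((n:ℝ)/4) * θ^2 := mul_le_mul_of_nonneg_right hsn hθ2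
      nlinarith [step1, hsθ, e2, hdLθ, hθ0]
    have hC : Real.exp (θ * ((n:ℝ) - 1) + ((n:ℝ) + s) * (Real.exp (-θ) - 1)) ≤ (n:ℝ) ^ (-d) := by
      rw [← hrpow]
      exact Real.exp_le_exp.2 hE1
    rw [one_mul]
    have := le_trans hB hC
    linarith [hA, this]
  · -- upper bound: poissonize at ν = n - s
    have hν0 : (0:ℝ) ≤ (n:ℝ) - s := by linarith
    have hA := dp_phi_lower h0 h1 hanti hν0 n
    have hB := dp_chernoff_upper (l := (n:ℝ) - s) hν0 hθ0 (n+1)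
    have hE2 : ((n:ℝ) - s) * (Real.exp θ - 1) - θ * ((n:ℕ) + 1 : ℕ) ≤ -(d * L) := by
      push_cast
      have hq := dp_exp_quad_pos hθ0 hθ1
      have step1 : ((n:ℝ) - s) * (Real.exp θ - 1) ≤ ((n:ℝ) - s) * (θ + (3/4)*θ^2) :=
        mul_le_mul_of_nonneg_left (by linarith) hν0
      have hθ2 : 0 ≤ θ^2 := sq_nonneg θ
      have e2 : 0 ≤ s * θ^2 := mul_nonneg hs0 hθ2
      nlinarith [step1, hsθ, e2, hdLθ, hθ0]
    have hC : Real.exp (((n:ℝ) - s) * (Real.exp θ - 1) - θ * ((n:ℕ) + 1 : ℕ)) ≤ (n:ℝ) ^ (-d) := by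
      rw [← hrpow]
      exact Real.exp_le_exp.2 hE2
    rw [one_mul]
    have := le_trans hB hC
    linarith [hA, this]
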